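/- arXiv:1407.7726 — 5 statements merged into one kernel-verified Lean document; each statement's English description precedes it below -/
import Mathlib

section
/- For all positive integers k, the k-th Genocchi number satisfies G_k = (-1)^k * k * ∑_{m=1}^{k} (-1)^m * (m-1)! / 2^{m-1} * S(k,m), where S(k,m) denotes the Stirling number of the second kind. -/
open Finset PowerSeries


/-- Stirling numbers of the second kind. -/
def stirling2 : ℕ → ℕ → ℕ
  | 0, 0 => 1
  | 0, _ + 1 => 0
  | _ + 1, 0 => 0
  | n + 1, k + 1 => (k + 1) * stirling2 n (k + 1) + stirling2 n k


lemma stirling2_succ_succ (n k : ℕ) :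
    stirling2 (n+1) (k+1) = (k+1) * stirling2 n (k+1) + stirling2 n k := rfl

lemma stirling2_zero_right : ∀ n, stirling2 n 0 = if n = 0 then 1 else 0
  | 0 => rfl
  | _ + 1 => rfl

lemma stirling2_eq_zero_of_lt : ∀ {n k : ℕ}, n < k → stirling2 n k = 0
  | 0, _ + 1, _ => rfl
  | n + 1, k + 1, h => by
    rw [stirling2_succ_succ, stirling2_eq_zero_of_lt (show n < k + 1 by omega),
      stirling2_eq_zero_of_lt (show n < k by omega)]
    simp

lemma sum_choose_stirling2 : ∀ n m : ℕ,
    ∑ j ∈ range (n+1), n.choose j * stirling2 j m = stirling2 (n+1) (m+1)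
  | 0, m => by simp [stirling2_succ_succ, stirling2_eq_zero_of_lt]
  | n + 1, m => by
    rw [Finset.sum_range_succ' _ (n+1)]
    simp only [Nat.choose_succ_succ, add_mul, Nat.choose_zero_right]
    rw [Finset.sum_add_distrib]
    have h1 : (∑ j ∈ range (n+1), n.choose (j+1) * stirling2 (j+1) m)
        + 1 * stirling2 0 m = stirling2 (n+1) (m+1) := by
      have h := Finset.sum_range_succ' (fun j => n.choose j * stirling2 j m) (n+1)
      rw [Finset.sum_range_succ] at h
      simp only [Nat.choose_succ_self, zero_mul, add_zero, Nat.choose_zero_right] at h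
      rw [← h, sum_choose_stirling2 n m]
    rw [add_assoc, h1]
    cases m with
    | zero =>
      have hz : ∀ j : ℕ, stirling2 (j+1) 0 = 0 := fun j => rfl
      simp only [hz, mul_zero, Finset.sum_const_zero, zero_add]
      rw [stirling2_succ_succ (n+1) 0, hz n]
      simp
    | succ m' =>
      have hs : ∀ j, n.choose j * stirling2 (j+1) (m'+1)
          = (m'+1) * (n.choose j * stirling2 j (m'+1)) + n.choose j * stirling2 j m' :=
        fun j => by rw [stirling2_succ_succ]; ring
      rw [Finset.sum_congr rfl (fun j _ => hs j), Finset.sum_add_distrib, ← Finset.mul_sum,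
        sum_choose_stirling2 n (m'+1), sum_choose_stirling2 n m',
        stirling2_succ_succ (n+1) (m'+1)]
      ring

lemma coeff_exp_sub_one (q : ℕ) :
    coeff q (exp ℚ - 1) = if q = 0 then 0 else ((q.factorial : ℚ))⁻¹ := by
  rw [map_sub, coeff_exp]
  cases q with
  | zero => simp
  | succ q => simp [coeff_one, Nat.factorial]

lemma coeff_exp_sub_one_pow : ∀ (m n : ℕ),
    (n.factorial : ℚ) * coeff n ((exp ℚ - 1)^m)
      = m.factorial * stirling2 n m
  | 0, n => by
    cases n with
    | zero => simp [stirling2_zero_right]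
    | succ n => simp [coeff_one, stirling2_zero_right]
  | m + 1, n => by
    rw [pow_succ, coeff_mul, Finset.Nat.sum_antidiagonal_eq_sum_range_succ_mk,
      Finset.mul_sum, Finset.sum_range_succ]
    have htop : (n.factorial : ℚ) * (coeff n ((exp ℚ - 1)^m) * coeff (n - n) (exp ℚ - 1)) = 0 := by
      simp [coeff_exp_sub_one]
    rw [htop, add_zero]
    have hterm : ∀ k ∈ range n,
        (n.factorial : ℚ) * (coeff k ((exp ℚ - 1)^m) * coeff (n - k) (exp ℚ - 1))
        = (n.choose k : ℚ) * (m.factorial * stirling2 k m) := by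
      intro k hk
      rw [Finset.mem_range] at hk
      have hne : n - k ≠ 0 := by omega
      rw [coeff_exp_sub_one, if_neg hne]
      have hchoose : (n.choose k : ℚ) * (k.factorial * (n-k).factorial) = n.factorial := by
        rw_mod_cast [← Nat.choose_mul_factorial_mul_factorial (le_of_lt hk)]
        push_cast; ring
      have hfne : ((n-k).factorial : ℚ) ≠ 0 := Nat.cast_ne_zero.2 (n-k).factorial_ne_zero
      calc (n.factorial : ℚ) * (coeff k ((exp ℚ - 1)^m) * ((n-k).factorial : ℚ)⁻¹)
          = ((n.choose k : ℚ) * (k.factorial * (n-k).factorial)) *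
              (coeff k ((exp ℚ - 1)^m) * ((n-k).factorial : ℚ)⁻¹) := by rw [hchoose]
        _ = (n.choose k : ℚ) * ((k.factorial : ℚ) * coeff k ((exp ℚ - 1)^m)) *
              (((n-k).factorial : ℚ) * ((n-k).factorial : ℚ)⁻¹) := by ring
        _ = (n.choose k : ℚ) * (m.factorial * stirling2 k m) := by
              rw [mul_inv_cancel₀ hfne, coeff_exp_sub_one_pow m k]; ring
    rw [Finset.sum_congr rfl hterm]
    have hnat : (∑ k ∈ range n, n.choose k * stirling2 k m) + stirling2 n m
        = stirling2 (n+1) (m+1) := by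
      rw [← sum_choose_stirling2 n m, Finset.sum_range_succ, Nat.choose_self, one_mul]
    have hq : (∑ k ∈ range n, (n.choose k : ℚ) * (stirling2 k m : ℚ)) + (stirling2 n m : ℚ)
        = (stirling2 (n+1) (m+1) : ℚ) := by exact_mod_cast hnat
    have hsum : ∑ k ∈ range n, (n.choose k : ℚ) * ((m.factorial : ℚ) * stirling2 k m)
        = (m.factorial : ℚ) * ((stirling2 (n+1) (m+1) : ℚ) - stirling2 n m) := by
      have e : ∀ k ∈ range n, (n.choose k : ℚ) * ((m.factorial : ℚ) * stirling2 k m)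
          = (m.factorial : ℚ) * ((n.choose k : ℚ) * stirling2 k m) := by intros; ring
      rw [Finset.sum_congr rfl e, ← Finset.mul_sum]
      linear_combination (m.factorial : ℚ) * hq
    rw [hsum, stirling2_succ_succ]
    push_cast [Nat.factorial_succ]; ring

noncomputable def Aps : PowerSeries ℚ := 2 * (exp ℚ + 1)⁻¹

noncomputable def aseq (n : ℕ) : ℚ := n.factorial * coeff n Aps

lemma aseq_def (n : ℕ) : aseq n = n.factorial * coeff n Aps := rfl

lemma constCoeff_exp_add_one : constantCoeff (exp ℚ + 1) = 2 := by
  rw [map_add, constantCoeff_exp, map_one]; norm_num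

lemma constCoeff_ne : constantCoeff (exp ℚ + 1) ≠ 0 := by
  rw [constCoeff_exp_add_one]; norm_num

lemma exp_add_one_ne_zero : (exp ℚ + 1 : ℚ⟦X⟧) ≠ 0 :=
  fun h => constCoeff_ne (by rw [h, map_zero])

lemma hA : Aps * (exp ℚ + 1) = 2 := by
  rw [Aps, mul_assoc, PowerSeries.inv_mul_cancel _ constCoeff_ne, mul_one]

lemma two_eq_C : (2 : ℚ⟦X⟧) = C 2 := by
  rw [← map_ofNat (C (R := ℚ)) 2]

lemma parity : Aps + evalNegHom Aps = 2 := by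
  have h2 : evalNegHom Aps * (evalNegHom (exp ℚ) + 1) = 2 := by
    have h := congrArg evalNegHom hA
    rw [map_mul, map_add, map_one, map_ofNat] at h
    exact h
  have h3 : evalNegHom Aps * (1 + exp ℚ) = 2 * exp ℚ := by
    have h := congrArg (· * exp ℚ) h2
    rw [mul_assoc, add_mul, one_mul, mul_comm (evalNegHom (exp ℚ)) (exp ℚ),
      exp_mul_exp_neg_eq_one] at h
    exact h
  have h4 : (Aps + evalNegHom Aps) * (exp ℚ + 1) = 2 * (exp ℚ + 1) := by
    rw [add_mul, hA, add_comm (exp ℚ) 1, h3]; ring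
  exact mul_right_cancel₀ exp_add_one_ne_zero h4

lemma coeff_evalNegHom (f : ℚ⟦X⟧) (n : ℕ) :
    coeff n (evalNegHom f) = (-1)^n * coeff n f := by
  rw [evalNegHom, coeff_rescale]

lemma coeff_two (n : ℕ) : coeff n (2 : ℚ⟦X⟧) = if n = 0 then 2 else 0 := by
  rw [two_eq_C, coeff_C]

lemma aseq_even_eq_zero {n : ℕ} (hn : n ≠ 0) (he : Even n) : aseq n = 0 := by
  have h := congrArg (coeff n) parity
  rw [map_add, coeff_evalNegHom, he.neg_one_pow, one_mul, coeff_two, if_neg hn] at h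
  have : coeff n Aps = 0 := by linarith
  rw [aseq, this, mul_zero]

lemma aseq_zero : aseq 0 = 1 := by
  have h := congrArg (constantCoeff) hA
  rw [map_mul, constCoeff_exp_add_one] at h
  have h2 : constantCoeff (2 : ℚ⟦X⟧) = 2 := by rw [two_eq_C, constantCoeff_C]
  rw [h2] at h
  have : constantCoeff Aps = 1 := by linarith
  rw [aseq, Nat.factorial_zero, coeff_zero_eq_constantCoeff, this]
  norm_num

noncomputable def Bps : ℚ⟦X⟧ := C (-2⁻¹) * (exp ℚ - 1)

lemma hAB : Aps * (1 - Bps) = 1 := by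
  have h1 : (1 : ℚ⟦X⟧) - Bps = C 2⁻¹ * (exp ℚ + 1) := by
    rw [Bps]
    have : (1 : ℚ⟦X⟧) = C 2⁻¹ + C 2⁻¹ := by
      rw [← map_add, ← map_one (C (R := ℚ))]; norm_num
    rw [mul_add, mul_sub]
    nth_rewrite 1 [this]
    rw [map_neg]
    ring
  rw [h1, Aps, mul_assoc, ← mul_assoc ((exp ℚ + 1)⁻¹), mul_comm ((exp ℚ + 1)⁻¹),
    mul_assoc, PowerSeries.inv_mul_cancel _ constCoeff_ne, mul_one, two_eq_C, ← map_mul]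
  norm_num

lemma coeff_Aps_eq (n : ℕ) :
    coeff n Aps = ∑ i ∈ range (n+1), coeff n (Bps ^ i) := by
  have hgeom : (∑ i ∈ range (n+1), Bps^i) * (1 - Bps) = 1 - Bps^(n+1) := by
    have h := geom_sum_mul Bps (n+1)
    linear_combination -h
  have hrep : Aps = (∑ i ∈ range (n+1), Bps^i) + Aps * Bps^(n+1) := by
    linear_combination (∑ i ∈ range (n+1), Bps^i) * hAB - Aps * hgeom
  have hXB : (X : ℚ⟦X⟧) ∣ Bps := by
    rw [X_dvd_iff, Bps, map_mul, map_sub, constantCoeff_exp, map_one, constantCoeff_C]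
    norm_num
  have hdvd : (X : ℚ⟦X⟧)^(n+1) ∣ Aps * Bps^(n+1) :=
    Dvd.dvd.mul_left (pow_dvd_pow_of_dvd hXB (n+1)) Aps
  have hc0 : coeff n (Aps * Bps^(n+1)) = 0 :=
    X_pow_dvd_iff.1 hdvd n (Nat.lt_succ_self n)
  rw [hrep, map_add, hc0, add_zero, map_sum]

lemma coeff_Bpow (i n : ℕ) :
    coeff n (Bps ^ i) = (-2⁻¹ : ℚ)^i * coeff n ((exp ℚ - 1)^i) := by
  rw [Bps, mul_pow, ← map_pow, coeff_C_mul]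

lemma aseq_formula (n : ℕ) :
    aseq n = ∑ m ∈ range (n+1), (-1)^m * (m.factorial : ℚ) / 2^m * stirling2 n m := by
  rw [aseq, coeff_Aps_eq, Finset.mul_sum]
  apply Finset.sum_congr rfl
  intro m _
  rw [coeff_Bpow]
  have h := coeff_exp_sub_one_pow m n
  calc (n.factorial : ℚ) * ((-2⁻¹ : ℚ)^m * coeff n ((exp ℚ - 1)^m))
      = (-2⁻¹ : ℚ)^m * ((n.factorial : ℚ) * coeff n ((exp ℚ - 1)^m)) := by ring
    _ = (-2⁻¹ : ℚ)^m * ((m.factorial : ℚ) * stirling2 n m) := by rw [h]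
    _ = (-1)^m * (m.factorial : ℚ) / 2^m * stirling2 n m := by
        rw [neg_pow, inv_pow]; field_simp

noncomputable def cc (m : ℕ) : ℚ := (-1)^m * (m.factorial : ℚ) / 2^m

lemma aseq_formula' (n : ℕ) : aseq n = ∑ m ∈ range (n+1), cc m * stirling2 n m :=
  aseq_formula n

lemma h_relation (k : ℕ) :
    ∑ m ∈ Finset.Icc 1 (k+1),
        (-1:ℚ) ^ m * ((m - 1).factorial : ℚ) / 2 ^ (m - 1) * stirling2 (k+1) m
      = aseq k - 2 * (if k = 0 then 1 else 0) := by
  rw [← Finset.Ico_add_one_right_eq_Icc, Finset.sum_Ico_eq_sum_range]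
  have hr : k + 1 + 1 - 1 = k + 1 := by omega
  rw [hr]
  have hkey : ∀ i ∈ range (k+1),
      (-1:ℚ) ^ (1+i) * (((1+i) - 1).factorial : ℚ) / 2 ^ ((1+i) - 1) * stirling2 (k+1) (1+i)
      = 2 * (cc (i+1) * stirling2 k (i+1)) - cc i * stirling2 k i := by
    intro i _
    have h1 : 1 + i = i + 1 := by omega
    rw [h1, Nat.add_sub_cancel, stirling2_succ_succ k i, cc, cc]
    push_cast [Nat.factorial_succ, pow_succ]
    field_simp
    ring
  rw [Finset.sum_congr rfl hkey, Finset.sum_sub_distrib, ← Finset.mul_sum,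
    ← aseq_formula']
  have e1 : ∑ i ∈ range (k+1), cc (i+1) * (stirling2 k (i+1) : ℚ)
      = aseq k - cc 0 * stirling2 k 0 := by
    have h := Finset.sum_range_succ' (fun j => cc j * (stirling2 k j : ℚ)) (k+1)
    rw [Finset.sum_range_succ, stirling2_eq_zero_of_lt (Nat.lt_succ_self k)] at h
    simp only [Nat.cast_zero, mul_zero, add_zero] at h
    rw [← aseq_formula'] at h
    linarith [h]
  rw [e1]
  have hc0 : cc 0 = 1 := by simp [cc]
  have hs0 : (stirling2 k 0 : ℚ) = if k = 0 then 1 else 0 := by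
    rw [stirling2_zero_right]; split <;> norm_num
  rw [hc0, one_mul, hs0]
  ring


/-- Main theorem: for Genocchi numbers `G` (defined by the EGF
`2t/(e^t+1) = ∑_{n≥1} G_n t^n/n!`) and all `k ≥ 1`,
`G_k = (-1)^k k ∑_{m=1}^k (-1)^m (m-1)!/2^{m-1} S(k,m)`. -/
theorem genocchi_eq_sum_stirling2
    (G : ℕ → ℚ)
    (hG : (PowerSeries.mk fun n => G n / n.factorial) * (PowerSeries.exp ℚ + 1)
        = 2 * PowerSeries.X) :
    ∀ k : ℕ, 1 ≤ k →
      G k = (-1) ^ k * k * ∑ m ∈ Finset.Icc 1 k,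
        (-1) ^ m * ((m - 1).factorial : ℚ) / 2 ^ (m - 1) * stirling2 k m := by
  have hM : (PowerSeries.mk fun n => G n / n.factorial) = X * Aps := by
    have h2 : (X : ℚ⟦X⟧) * Aps * (exp ℚ + 1) = 2 * X := by
      linear_combination X * hA
    exact mul_right_cancel₀ exp_add_one_ne_zero (hG.trans h2.symm)
  have hGk : ∀ k : ℕ, G (k+1) = (k+1) * aseq k := by
    intro k
    have h := congrArg (coeff (k+1)) hM
    rw [coeff_mk, coeff_succ_X_mul] at h
    have hfac : ((k+1).factorial : ℚ) ≠ 0 := Nat.cast_ne_zero.2 (k+1).factorial_ne_zero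
    have : G (k+1) = ((k+1).factorial : ℚ) * coeff k Aps := by
      field_simp at h
      linarith [h]
    rw [this, aseq_def, Nat.factorial_succ]
    push_cast
    ring
  intro k hk
  obtain ⟨k', rfl⟩ : ∃ k', k = k' + 1 := ⟨k - 1, by omega⟩
  rw [h_relation k', hGk k']
  cases k' with
  | zero => rw [aseq_zero]; norm_num
  | succ j =>
    rw [if_neg (Nat.succ_ne_zero j), mul_zero, sub_zero]
    rcases Nat.even_or_odd (j+1) with he | ho
    · rw [aseq_even_eq_zero (Nat.succ_ne_zero j) he]; ring
    · have : Even (j+1+1) := Odd.add_one ho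
      rw [this.neg_one_pow]
      push_cast
      ring
end

section
/- For all nonnegative integers n, B_n = ∑_{k=0}^{n} 1/(k+1) * ∑_{j=0}^{k} (-1)^j * C(k,j) * j^n, where B_n is the n-th Bernoulli number (with the convention 0^0 = 1). -/
open Finset

def TT (k n : ℕ) : ℚ := ∑ j ∈ range (k+1), (-1)^j * (k.choose j : ℚ) * (j:ℚ)^n

lemma TT_eq_zero : ∀ n k, n < k → TT k n = 0 := by
  intro n
  induction n using Nat.strong_induction_on with
  | _ n IH =>
    intro k hk
    match n, k with
    | n, 0 => omega
    | 0, (k+1) =>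
      unfold TT
      have h := Int.alternating_sum_range_choose (n := k+1)
      rw [if_neg (Nat.succ_ne_zero k)] at h
      have h2 : ((∑ i ∈ range (k + 1 + 1), (-1) ^ i * ((k+1).choose i) : ℤ) : ℚ) = 0 := by
        rw [h]; norm_num
      push_cast at h2
      simpa using h2
    | (n+1), (k+1) =>
      have key : TT (k+1) (n+1)
          = -(k+1) * ∑ j ∈ range (k+1), (-1)^j * ((k.choose j : ℚ)) * ((j:ℚ)+1)^n := by
        unfold TT
        rw [sum_range_succ' _ (k+1), Finset.mul_sum]
        have h0 : ((-1:ℚ))^0 * ((k+1).choose 0 : ℚ) * ((0:ℕ):ℚ)^(n+1) = 0 := by simp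
        rw [h0, add_zero]
        refine Finset.sum_congr rfl fun x _ => ?_
        have hc : ((k+1) * (k.choose x) : ℚ) = (((k+1).choose (x+1)) * (x+1) : ℚ) := by
          exact_mod_cast congrArg (Nat.cast : ℕ → ℚ) (Nat.add_one_mul_choose_eq k x)
        push_cast
        push_cast at hc
        linear_combination ((-1:ℚ))^x * ((x:ℚ)+1)^n * hc
      rw [key]
      have hexp : ∀ j : ℕ, ((j:ℚ)+1)^n = ∑ m ∈ range (n+1), (n.choose m : ℚ) * (j:ℚ)^m := by
        intro j
        rw [add_pow]
        refine Finset.sum_congr rfl fun m _ => ?_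
        ring
      have : ∑ j ∈ range (k+1), (-1)^j * ((k.choose j : ℚ)) * ((j:ℚ)+1)^n
          = ∑ m ∈ range (n+1), (n.choose m : ℚ) * TT k m := by
        simp_rw [hexp, Finset.mul_sum]
        rw [Finset.sum_comm]
        refine Finset.sum_congr rfl fun m _ => ?_
        unfold TT
        rw [Finset.mul_sum]
        refine Finset.sum_congr rfl fun j _ => ?_
        ring
      rw [this]
      have hz : ∀ m ∈ range (n+1), (n.choose m : ℚ) * TT k m = 0 := by
        intro m hm
        rw [Finset.mem_range] at hm
        rw [IH m (by omega) k (by omega), mul_zero]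
      rw [Finset.sum_congr rfl hz]
      simp

def ff (n : ℕ) : ℚ := ∑ k ∈ Finset.range (n+1), (1 / (k + 1 : ℚ)) * TT k n

lemma ff_extend {m k : ℕ} (h : k ≤ m) :
    ff k = ∑ r ∈ range (m+1), (1 / (r + 1 : ℚ)) * TT r k := by
  unfold ff
  apply Finset.sum_subset
  · exact Finset.range_subset_range.mpr (by omega)
  · intro r _ hnr
    rw [Finset.mem_range, not_lt] at hnr
    rw [TT_eq_zero k r (by omega), mul_zero]

lemma binom_pow (m j : ℕ) :
    ∑ k ∈ range (m+1), (((m+1).choose k : ℚ)) * (j:ℚ)^k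
      = ((j:ℚ)+1)^(m+1) - (j:ℚ)^(m+1) := by
  have h : ((j:ℚ)+1)^(m+1)
      = (∑ k ∈ range (m+1), (j:ℚ)^k * (1:ℚ)^(m+1-k) * ((m+1).choose k : ℚ)) + (j:ℚ)^(m+1) := by
    rw [add_pow, sum_range_succ]
    simp
  rw [h]
  rw [add_sub_cancel_right]
  refine Finset.sum_congr rfl fun k _ => ?_
  simp [mul_comm]

lemma Ub (m r : ℕ) :
    ∑ j ∈ range (r+1), (-1)^j * (r.choose j : ℚ) * (((j:ℚ)+1)^(m+1) - (j:ℚ)^(m+1))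
      = -(TT (r+1) (m+1)) := by
  have h1 : TT (r+1) (m+1)
      = ∑ i ∈ range (r+1), (-1)^(i+1) * ((r.choose i : ℚ) + (r.choose (i+1) : ℚ)) * ((i:ℚ)+1)^(m+1) := by
    unfold TT
    rw [sum_range_succ' _ (r+1)]
    have h0 : ((-1:ℚ))^0 * (((r+1).choose 0 : ℕ):ℚ) * ((0:ℕ):ℚ)^(m+1) = 0 := by simp
    rw [h0, add_zero]
    refine Finset.sum_congr rfl fun i _ => ?_
    rw [Nat.choose_succ_succ]
    push_cast
    ring
  have h3 : ∑ i ∈ range (r+1), (-1)^i * (r.choose i : ℚ) * (i:ℚ)^(m+1)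
      = -∑ i ∈ range (r+1), (-1)^i * (r.choose (i+1) : ℚ) * ((i:ℚ)+1)^(m+1) := by
    rw [sum_range_succ' _ r, sum_range_succ _ r]
    have h0 : ((-1:ℚ))^0 * ((r.choose 0 : ℕ):ℚ) * ((0:ℕ):ℚ)^(m+1) = 0 := by simp
    have htop : ((-1:ℚ))^r * ((r.choose (r+1) : ℕ):ℚ) * ((r:ℚ)+1)^(m+1) = 0 := by
      simp [Nat.choose_succ_self]
    rw [h0, add_zero, htop, add_zero, ← Finset.sum_neg_distrib]
    refine Finset.sum_congr rfl fun i _ => ?_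
    push_cast
    ring
  have hsplit : ∑ j ∈ range (r+1), (-1)^j * (r.choose j : ℚ) * (((j:ℚ)+1)^(m+1) - (j:ℚ)^(m+1))
      = (∑ j ∈ range (r+1), (-1)^j * (r.choose j : ℚ) * ((j:ℚ)+1)^(m+1))
        - ∑ j ∈ range (r+1), (-1)^j * (r.choose j : ℚ) * (j:ℚ)^(m+1) := by
    rw [← Finset.sum_sub_distrib]
    exact Finset.sum_congr rfl fun j _ => by ring
  rw [hsplit, h3, h1, sub_neg_eq_add, ← Finset.sum_neg_distrib, ← Finset.sum_add_distrib]
  refine Finset.sum_congr rfl fun i _ => by ring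

lemma Gc (m : ℕ) :
    ∑ r ∈ range (m+1), (1 / (r + 1 : ℚ)) * TT (r+1) (m+1)
      = -(if m = 0 then 1 else 0) := by
  have step1 : ∀ r : ℕ, (1 / (r + 1 : ℚ)) * TT (r+1) (m+1)
      = ∑ j ∈ range (r+1), (-1)^(j+1) * (r.choose j : ℚ) * ((j:ℚ)+1)^m := by
    intro r
    unfold TT
    rw [sum_range_succ' _ (r+1)]
    have h0 : ((-1:ℚ))^0 * (((r+1).choose 0 : ℕ):ℚ) * ((0:ℕ):ℚ)^(m+1) = 0 := by simp
    rw [h0, add_zero, Finset.mul_sum]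
    refine Finset.sum_congr rfl fun j _ => ?_
    have hc : ((r+1) * (r.choose j) : ℚ) = (((r+1).choose (j+1)) * (j+1) : ℚ) := by
      exact_mod_cast congrArg (Nat.cast : ℕ → ℚ) (Nat.add_one_mul_choose_eq r j)
    have hr1 : ((r:ℚ)+1) ≠ 0 := by positivity
    have hj1 : ((j:ℚ)+1) ≠ 0 := by positivity
    push_cast
    push_cast at hc
    rw [div_mul_eq_mul_div, div_eq_iff hr1]
    linear_combination ((-1:ℚ))^j * ((j:ℚ)+1)^m * hc
  simp_rw [step1, Finset.range_eq_Ico]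
  rw [← Finset.sum_Ico_Ico_comm 0 (m+1)
    (fun i j => (-1)^(i+1) * (j.choose i : ℚ) * ((i:ℚ)+1)^m)]
  have hock : ∀ i : ℕ, ∑ j ∈ Finset.Ico i (m+1), (-1)^(i+1) * (j.choose i : ℚ) * ((i:ℚ)+1)^m
      = (-1)^(i+1) * (((m+1).choose (i+1) : ℕ) : ℚ) * ((i:ℚ)+1)^m := by
    intro i
    have hsum : ∑ j ∈ Finset.Ico i (m+1), ((j.choose i : ℕ) : ℚ)
        = (((m+1).choose (i+1) : ℕ) : ℚ) := by
      rw [Finset.Ico_add_one_right_eq_Icc]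
      exact_mod_cast congrArg (Nat.cast : ℕ → ℚ) (Nat.sum_Icc_choose m i)
    calc ∑ j ∈ Finset.Ico i (m+1), (-1)^(i+1) * (j.choose i : ℚ) * ((i:ℚ)+1)^m
        = ((-1)^(i+1) * ((i:ℚ)+1)^m) * ∑ j ∈ Finset.Ico i (m+1), ((j.choose i : ℕ) : ℚ) := by
          rw [Finset.mul_sum]; exact Finset.sum_congr rfl fun j _ => by ring
      _ = (-1)^(i+1) * (((m+1).choose (i+1) : ℕ) : ℚ) * ((i:ℚ)+1)^m := by rw [hsum]; ring
  rw [Finset.sum_congr rfl (fun i _ => hock i)]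
  have hT : TT (m+1) m = 0 := TT_eq_zero m (m+1) (Nat.lt_succ_self m)
  unfold TT at hT
  rw [sum_range_succ' _ (m+1)] at hT
  have h0 : ((-1:ℚ))^0 * (((m+1).choose 0 : ℕ):ℚ) * ((0:ℕ):ℚ)^m = (if m = 0 then 1 else 0) := by
    rcases m with _ | m <;> simp
  rw [h0] at hT
  push_cast at hT
  rw [← Finset.range_eq_Ico]
  exact eq_neg_of_add_eq_zero_left hT

lemma G (m : ℕ) :
    ∑ k ∈ range (m+1), (((m+1).choose k : ℚ)) * ff k = (if m = 0 then 1 else 0) := by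
  have h1 : ∑ k ∈ range (m+1), (((m+1).choose k : ℚ)) * ff k
      = ∑ r ∈ range (m+1), (1 / (r + 1 : ℚ)) *
          ∑ k ∈ range (m+1), (((m+1).choose k : ℚ)) * TT r k := by
    have : ∀ k ∈ range (m+1), (((m+1).choose k : ℚ)) * ff k
        = ∑ r ∈ range (m+1), (1 / (r + 1 : ℚ)) * ((((m+1).choose k : ℚ)) * TT r k) := by
      intro k hk
      rw [ff_extend (Nat.lt_succ_iff.mp (Finset.mem_range.mp hk)), Finset.mul_sum]
      exact Finset.sum_congr rfl fun r _ => by ring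
    rw [Finset.sum_congr rfl this, Finset.sum_comm]
    exact Finset.sum_congr rfl fun r _ => by rw [Finset.mul_sum]
  have h2 : ∀ r : ℕ, ∑ k ∈ range (m+1), (((m+1).choose k : ℚ)) * TT r k
      = -(TT (r+1) (m+1)) := by
    intro r
    have : ∑ k ∈ range (m+1), (((m+1).choose k : ℚ)) * TT r k
        = ∑ j ∈ range (r+1), (-1)^j * (r.choose j : ℚ) *
            (((j:ℚ)+1)^(m+1) - (j:ℚ)^(m+1)) := by
      unfold TT
      simp_rw [Finset.mul_sum]
      rw [Finset.sum_comm]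
      refine Finset.sum_congr rfl fun j _ => ?_
      rw [← binom_pow m j, Finset.mul_sum]
      exact Finset.sum_congr rfl fun k _ => by ring
    rw [this, Ub]
  simp_rw [h1, h2]
  have : ∑ r ∈ range (m+1), (1 / (r + 1 : ℚ)) * -(TT (r+1) (m+1))
      = -∑ r ∈ range (m+1), (1 / (r + 1 : ℚ)) * TT (r+1) (m+1) := by
    rw [← Finset.sum_neg_distrib]
    exact Finset.sum_congr rfl fun r _ => by ring
  rw [this, Gc, neg_neg]

lemma bernoulli_eq_ff : ∀ n : ℕ, bernoulli n = ff n := by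
  intro n
  induction n using Nat.strong_induction_on with
  | _ n IH =>
    have h1 := sum_bernoulli (n+1)
    have h2 := G n
    rw [sum_range_succ] at h1 h2
    have he : ∑ k ∈ range n, ((n+1).choose k : ℚ) * bernoulli k
        = ∑ k ∈ range n, ((n+1).choose k : ℚ) * ff k :=
      Finset.sum_congr rfl fun k hk => by rw [IH k (Finset.mem_range.mp hk)]
    have hif : (if n + 1 = 1 then (1:ℚ) else 0) = (if n = 0 then 1 else 0) := by
      rcases n with _ | n <;> simp
    rw [hif, he] at h1
    have hkey : ((n+1).choose n : ℚ) * bernoulli n = ((n+1).choose n : ℚ) * ff n := by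
      linarith [h1, h2]
    have hne : ((n+1).choose n : ℚ) ≠ 0 := by
      have : 0 < (n+1).choose n := Nat.choose_pos (by omega)
      positivity
    exact mul_left_cancel₀ hne hkey

/-- `B_n = ∑_{k=0}^n 1/(k+1) ∑_{j=0}^k (-1)^j C(k,j) j^n` (with `0^0 = 1`). -/
theorem bernoulli_eq_double_sum (n : ℕ) :
    bernoulli n = ∑ k ∈ Finset.range (n + 1), (1 / (k + 1 : ℚ)) *
      ∑ j ∈ Finset.range (k + 1), (-1) ^ j * (k.choose j : ℚ) * (j : ℚ) ^ n := by
  rw [bernoulli_eq_ff]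
  rfl
end

section
/- For all nonnegative integers n, B_n = ∑_{i=0}^{n} (-1)^i * C(n+1, i+1) / C(n+i, i) * S(n+i, i), where B_n is the n-th Bernoulli number and S the Stirling number of the second kind (with S(n,0) interpreted as 1 if n=0 and 0 otherwise). -/
open PowerSeries Finset

private lemma derivative_exp_q : d⁄dX ℚ (exp ℚ) = exp ℚ := by
  ext n
  rw [coeff_derivative, coeff_exp, coeff_exp]
  simp only [Algebra.algebraMap_self, RingHom.id_apply]
  rw [Nat.factorial_succ]
  push_cast
  have h1 : ((n : ℚ) + 1) ≠ 0 := by positivity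
  have h2 : ((n.factorial : ℚ)) ≠ 0 := by exact_mod_cast n.factorial_ne_zero
  field_simp

/-- EGF of Stirling numbers of the second kind. -/
private lemma stirling_egf : ∀ m k : ℕ,
    (m.factorial : ℚ) * PowerSeries.coeff m ((exp ℚ - 1) ^ k)
      = k.factorial * stirling2 m k := by
  intro m
  induction m with
  | zero =>
    intro k
    rw [coeff_zero_eq_constantCoeff, map_pow]
    have h0 : constantCoeff (exp ℚ - 1) = 0 := by
      simp [map_sub, constantCoeff_exp]
    rw [h0]
    cases k with
    | zero => simp [stirling2]
    | succ k => simp [stirling2, zero_pow]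
  | succ m ih =>
    intro k
    cases k with
    | zero =>
      simp [stirling2, coeff_one]
    | succ k =>
      have hder : d⁄dX ℚ ((exp ℚ - 1) ^ (k + 1))
          = (k + 1 : ℕ) • ((exp ℚ - 1) ^ k * exp ℚ) := by
        have hde : d⁄dX ℚ (exp ℚ - 1) = exp ℚ := by
          rw [map_sub, derivative_exp_q, Derivation.map_one_eq_zero, sub_zero]
        rw [Derivation.leibniz_pow, hde, Nat.add_sub_cancel, smul_eq_mul]
      have hco : PowerSeries.coeff (m + 1) ((exp ℚ - 1) ^ (k + 1)) * (m + 1)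
          = (k + 1 : ℚ) * PowerSeries.coeff m ((exp ℚ - 1) ^ k * exp ℚ) := by
        rw [← coeff_derivative, hder, map_nsmul]
        simp [nsmul_eq_mul]
      have hsplit : (exp ℚ - 1) ^ k * exp ℚ
          = (exp ℚ - 1) ^ (k + 1) + (exp ℚ - 1) ^ k := by ring
      have key : ((m + 1).factorial : ℚ)
            * PowerSeries.coeff (m + 1) ((exp ℚ - 1) ^ (k + 1))
          = (k + 1 : ℚ) * ((m.factorial : ℚ)
              * PowerSeries.coeff m ((exp ℚ - 1) ^ (k + 1))
            + (m.factorial : ℚ) * PowerSeries.coeff m ((exp ℚ - 1) ^ k)) := by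
        rw [Nat.factorial_succ]
        push_cast
        calc ((m : ℚ) + 1) * (m.factorial : ℚ)
              * PowerSeries.coeff (m + 1) ((exp ℚ - 1) ^ (k + 1))
            = (m.factorial : ℚ)
              * (PowerSeries.coeff (m + 1) ((exp ℚ - 1) ^ (k + 1)) * (m + 1)) := by
              ring
          _ = (m.factorial : ℚ)
              * ((k + 1 : ℚ) * PowerSeries.coeff m ((exp ℚ - 1) ^ k * exp ℚ)) := by
              rw [hco]
          _ = _ := by rw [hsplit, map_add]; ring
      rw [key, ih (k + 1), ih k]
      have hs : stirling2 (m + 1) (k + 1)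
          = (k + 1) * stirling2 m (k + 1) + stirling2 m k := rfl
      rw [hs, Nat.factorial_succ]
      push_cast
      ring

private noncomputable def fps : ℚ⟦X⟧ := PowerSeries.mk fun n => 1 / (n + 1).factorial

private lemma X_mul_fps : (X : ℚ⟦X⟧) * fps = exp ℚ - 1 := by
  ext n
  cases n with
  | zero =>
    simp [fps, coeff_zero_eq_constantCoeff, map_sub, map_mul, constantCoeff_exp]
  | succ n =>
    rw [coeff_succ_X_mul, map_sub, coeff_exp, coeff_one]
    simp [fps]

private lemma coeff_fps_pow (n i : ℕ) :
    ((n + i).factorial : ℚ) * PowerSeries.coeff n (fps ^ i)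
      = i.factorial * stirling2 (n + i) i := by
  have h : PowerSeries.coeff n (fps ^ i)
      = PowerSeries.coeff (n + i) ((exp ℚ - 1) ^ i) := by
    rw [← X_mul_fps, mul_pow, coeff_X_pow_mul]
  rw [h]
  exact stirling_egf (n + i) i

private lemma bps_mul_fps : bernoulliPowerSeries ℚ * fps = 1 := by
  have h := bernoulliPowerSeries_mul_exp_sub_one ℚ
  rw [← X_mul_fps] at h
  have h2 : (X : ℚ⟦X⟧) * (bernoulliPowerSeries ℚ * fps) = X * 1 := by
    rw [mul_one]
    calc (X : ℚ⟦X⟧) * (bernoulliPowerSeries ℚ * fps)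
        = bernoulliPowerSeries ℚ * (X * fps) := by ring
      _ = X := h
  exact mul_left_cancel₀ X_ne_zero h2

/-- B_n = sum_{i=0}^n (-1)^i C(n+1,i+1)/C(n+i,i) S(n+i,i). -/
theorem bernoulli_eq_sum_stirling2_ratio (n : ℕ) :
    bernoulli n = ∑ i ∈ Finset.range (n + 1),
      (-1) ^ i * ((n + 1).choose (i + 1) : ℚ) / ((n + i).choose i : ℚ)
        * stirling2 (n + i) i := by
  classical
  set B := bernoulliPowerSeries ℚ with hB
  -- the binomial expansion of 1 - (1-f)^(n+1)
  have expand : (1 : ℚ⟦X⟧) - (1 - fps) ^ (n + 1)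
      = ∑ i ∈ range (n + 1),
          PowerSeries.C ((-1) ^ i * ((n + 1).choose (i + 1) : ℚ)) * fps ^ (i + 1) := by
    have hb : ((1 : ℚ⟦X⟧) - fps) ^ (n + 1)
        = ∑ j ∈ range (n + 2),
            PowerSeries.C ((-1) ^ j * ((n + 1).choose j : ℚ)) * fps ^ j := by
      rw [sub_pow, ← Finset.sum_range_reflect]
      refine Finset.sum_congr rfl fun j hj => ?_
      rw [Finset.mem_range] at hj
      have hj' : j ≤ n + 1 := by omega
      have h1 : n + 1 - (n + 1 - j) = j := by omega
      have h2 : (n + 1).choose (n + 1 - j) = (n + 1).choose j := Nat.choose_symm hj'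
      have h3 : ((-1 : ℚ⟦X⟧)) ^ (n + 1 - j + (n + 1)) = (-1) ^ j := by
        have hmod : (n + 1 - j + (n + 1)) % 2 = j % 2 := by omega
        rw [neg_one_pow_eq_pow_mod_two, hmod, ← neg_one_pow_eq_pow_mod_two]
      have h0 : n + 1 + 1 - 1 - j = n + 1 - j := by omega
      rw [h0, h1, h2, h3, one_pow]
      have h4 : PowerSeries.C (((n + 1).choose j : ℚ)) = (((n + 1).choose j : ℕ) : ℚ⟦X⟧) :=
        map_natCast _ _
      rw [map_mul, map_pow, map_neg, map_one, h4]
      ring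
    rw [hb, Finset.sum_range_succ']
    simp only [pow_zero, Nat.choose_zero_right, Nat.cast_one, mul_one, one_mul, map_one]
    have : ∀ i ∈ range (n + 1),
        PowerSeries.C ((-1) ^ (i + 1) * ((n + 1).choose (i + 1) : ℚ)) * fps ^ (i + 1)
        = -(PowerSeries.C ((-1) ^ i * ((n + 1).choose (i + 1) : ℚ)) * fps ^ (i + 1)) := by
      intro i _
      rw [pow_succ]
      simp only [map_mul, map_neg, map_one, map_pow]
      ring
    rw [Finset.sum_congr rfl this, Finset.sum_neg_distrib]
    ring
  -- multiplying by B
  have key : B * ((1 : ℚ⟦X⟧) - (1 - fps) ^ (n + 1))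
      = ∑ i ∈ range (n + 1),
          PowerSeries.C ((-1) ^ i * ((n + 1).choose (i + 1) : ℚ)) * fps ^ i := by
    rw [expand, Finset.mul_sum]
    refine Finset.sum_congr rfl fun i _ => ?_
    calc B * (PowerSeries.C ((-1) ^ i * ((n + 1).choose (i + 1) : ℚ)) * fps ^ (i + 1))
        = PowerSeries.C ((-1) ^ i * ((n + 1).choose (i + 1) : ℚ)) * fps ^ i
            * (B * fps) := by ring
      _ = _ := by rw [bps_mul_fps, mul_one]
  -- the remainder term has vanishing n-th coefficient
  have hc0 : constantCoeff ((1 : ℚ⟦X⟧) - fps) = 0 := by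
    have : constantCoeff fps = 1 := by
      simp [fps, ← coeff_zero_eq_constantCoeff]
    simp [map_sub, this]
  have hdvd : (X : ℚ⟦X⟧) ^ (n + 1) ∣ ((1 : ℚ⟦X⟧) - fps) ^ (n + 1) * B :=
    Dvd.dvd.mul_right (pow_dvd_pow_of_dvd (X_dvd_iff.mpr hc0) _) _
  have hz : PowerSeries.coeff n (((1 : ℚ⟦X⟧) - fps) ^ (n + 1) * B) = 0 :=
    X_pow_dvd_iff.mp hdvd n (Nat.lt_succ_self n)
  -- hence coeff n B equals the coefficient of the sum
  have hsplit : B = B * ((1 : ℚ⟦X⟧) - (1 - fps) ^ (n + 1))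
      + ((1 : ℚ⟦X⟧) - fps) ^ (n + 1) * B := by ring
  have hcoeffB : PowerSeries.coeff n B
      = ∑ i ∈ range (n + 1),
          (-1) ^ i * ((n + 1).choose (i + 1) : ℚ) * PowerSeries.coeff n (fps ^ i) := by
    conv_lhs => rw [hsplit]
    rw [map_add, hz, add_zero, key, map_sum]
    exact Finset.sum_congr rfl fun i _ => by rw [coeff_C_mul]
  -- coeff n B = bernoulli n / n!
  have hbn : PowerSeries.coeff n B = bernoulli n / n.factorial := by
    rw [hB, bernoulliPowerSeries, coeff_mk]
    simp
  have hnfac : (n.factorial : ℚ) ≠ 0 := by exact_mod_cast n.factorial_ne_zero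
  have hmain : bernoulli n = (n.factorial : ℚ) * PowerSeries.coeff n B := by
    rw [hbn]; field_simp
  rw [hmain, hcoeffB, Finset.mul_sum]
  refine Finset.sum_congr rfl fun i _ => ?_
  -- per-term arithmetic
  have hfac : ((n + i).choose i : ℚ) * i.factorial * n.factorial = (n + i).factorial := by
    have h' := Nat.add_choose_mul_factorial_mul_factorial n i
    have h'' : (n + i).choose i * i.factorial * n.factorial = (n + i).factorial := by
      rw [mul_right_comm]; exact h'
    exact_mod_cast h''
  have hifac : (i.factorial : ℚ) ≠ 0 := by exact_mod_cast i.factorial_ne_zero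
  have hnifac : ((n + i).factorial : ℚ) ≠ 0 := by exact_mod_cast (n + i).factorial_ne_zero
  have hch : ((n + i).choose i : ℚ) ≠ 0 := by
    intro h
    rw [h, zero_mul, zero_mul] at hfac
    exact hnifac hfac.symm
  have hcf : PowerSeries.coeff n (fps ^ i)
      = i.factorial * stirling2 (n + i) i / (n + i).factorial := by
    have := coeff_fps_pow n i
    field_simp
    linarith [this]
  have hfe : ((n + i).factorial : ℚ) = ((n + i).choose i : ℚ) * i.factorial * n.factorial :=
    hfac.symm
  rw [hcf, hfe]
  field_simp
end

section
/- For all nonnegative integers n, B_n = ∑_{j=0}^{n} (-1)^j * C(n+1, j+1) * n!/(n+j)! * ∑_{k=0}^{j} (-1)^{j-k} * C(j,k) * k^{n+j}, where B_n is the n-th Bernoulli number (convention 0^0 = 1). -/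
open Finset PowerSeries

private lemma exp_sub_one_pow_eq (j : ℕ) :
    (PowerSeries.exp ℚ - 1) ^ j =
      ∑ k ∈ Finset.range (j + 1),
        PowerSeries.C ((-1) ^ (j - k) * (j.choose k : ℚ)) * rescale (k : ℚ) (exp ℚ) := by
  rw [sub_pow]
  refine Finset.sum_congr rfl fun k hk => ?_
  have hk' : k ≤ j := Nat.lt_succ_iff.mp (Finset.mem_range.mp hk)
  rw [← exp_pow_eq_rescale_exp, one_pow, mul_one, map_mul]
  have h1 : ((-1 : ℚ⟦X⟧)) ^ (k + j) = PowerSeries.C ((-1) ^ (j - k)) := by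
    rw [show k + j = (j - k) + 2 * k by omega, pow_add, pow_mul]
    simp
  rw [← h1]
  simp only [map_natCast]
  ring

private lemma coeff_exp_sub_one_pow_s5 (j m : ℕ) :
    PowerSeries.coeff m ((PowerSeries.exp ℚ - 1) ^ j) =
      (∑ k ∈ Finset.range (j + 1), (-1) ^ (j - k) * (j.choose k : ℚ) * (k : ℚ) ^ m)
        / m.factorial := by
  rw [exp_sub_one_pow_eq, map_sum, Finset.sum_div]
  refine Finset.sum_congr rfl fun k _ => ?_
  rw [coeff_C_mul, coeff_rescale, coeff_exp]
  simp [div_eq_mul_inv]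
  ring

/-- `B_n = ∑_{j=0}^n (-1)^j C(n+1,j+1) n!/(n+j)! ∑_{k=0}^j (-1)^{j-k} C(j,k) k^{n+j}`
(with `0^0 = 1`). -/
theorem bernoulli_eq_gould_double_sum (n : ℕ) :
    bernoulli n = ∑ j ∈ Finset.range (n + 1),
      (-1) ^ j * ((n + 1).choose (j + 1) : ℚ) * (n.factorial : ℚ) / ((n + j).factorial : ℚ) *
        ∑ k ∈ Finset.range (j + 1), (-1) ^ (j - k) * (j.choose k : ℚ) * (k : ℚ) ^ (n + j) := by
  set b : ℚ⟦X⟧ := PowerSeries.exp ℚ - 1 with hb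
  set Q : ℚ⟦X⟧ := ∑ j ∈ Finset.range (n + 1),
      PowerSeries.C ((-1) ^ j * ((n + 1).choose (j + 1) : ℚ)) * X ^ (n - j) * b ^ j with hQ
  -- key algebraic identity
  have key : b * Q = X ^ (n + 1) - (X - b) ^ (n + 1) := by
    rw [hQ, sub_pow]
    conv_rhs => rw [Finset.sum_range_succ]
    have hlast : (-1 : ℚ⟦X⟧) ^ (n + 1 + (n + 1)) * X ^ (n + 1) * b ^ (n + 1 - (n + 1)) *
        ((n + 1).choose (n + 1) : ℚ⟦X⟧) = X ^ (n + 1) := by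
      simp [← two_mul, pow_mul]
    rw [hlast, Finset.mul_sum, show ∀ x y : ℚ⟦X⟧, y - (x + y) = -x from fun x y => by ring,
      ← Finset.sum_neg_distrib, ← Finset.sum_range_reflect]
    refine Finset.sum_congr rfl fun j hj => ?_
    have hj' : j ≤ n := Nat.lt_succ_iff.mp (Finset.mem_range.mp hj)
    simp only [Nat.add_sub_cancel]
    rw [show n - (n - j) = j by omega, show n - j + 1 = n + 1 - j by omega,
      show (n + 1).choose (n + 1 - j) = (n + 1).choose j from Nat.choose_symm (by omega),
      show n + 1 - j = (n - j) + 1 by omega]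
    have h3 : ((-1 : ℚ⟦X⟧) ^ (j + (n + 1))) = - C ((-1) ^ (n - j)) := by
      rw [show j + (n + 1) = (n - j) + 2 * j + 1 by omega, pow_succ, pow_add, pow_mul]
      simp
    rw [h3, map_mul]
    simp only [map_natCast]
    ring
  -- multiply by the Bernoulli power series
  have main : bernoulliPowerSeries ℚ * (X ^ (n + 1) - (X - b) ^ (n + 1)) = X * Q := by
    rw [← key, ← mul_assoc, bernoulliPowerSeries_mul_exp_sub_one]
  -- extract coefficient 2n+1
  have hcoeff := congrArg (PowerSeries.coeff (2 * n + 1)) main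
  have hvanish : PowerSeries.coeff (2 * n + 1)
      (bernoulliPowerSeries ℚ * (X - b) ^ (n + 1)) = 0 := by
    have hdvd : (X : ℚ⟦X⟧) ^ 2 ∣ X - b := by
      rw [X_pow_dvd_iff]
      intro m hm
      interval_cases m <;> simp [hb, coeff_exp]
    have hdvd2 : (X : ℚ⟦X⟧) ^ (2 * (n + 1)) ∣ bernoulliPowerSeries ℚ * (X - b) ^ (n + 1) := by
      rw [pow_mul]
      exact Dvd.dvd.mul_left (pow_dvd_pow_of_dvd hdvd (n + 1)) _
    rw [X_pow_dvd_iff] at hdvd2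
    exact hdvd2 _ (by omega)
  have hxpow : PowerSeries.coeff (2 * n + 1) (bernoulliPowerSeries ℚ * X ^ (n + 1)) =
      bernoulli n / n.factorial := by
    rw [show 2 * n + 1 = n + (n + 1) by omega, coeff_mul_X_pow]
    simp [bernoulliPowerSeries]
  have hrhs : PowerSeries.coeff (2 * n + 1) (X * Q) =
      ∑ j ∈ Finset.range (n + 1), (-1) ^ j * ((n + 1).choose (j + 1) : ℚ) *
        ((∑ k ∈ Finset.range (j + 1), (-1) ^ (j - k) * (j.choose k : ℚ) * (k : ℚ) ^ (n + j))
          / (n + j).factorial) := by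
    rw [coeff_succ_X_mul, hQ, map_sum]
    refine Finset.sum_congr rfl fun j hj => ?_
    have hj' : j ≤ n := Nat.lt_succ_iff.mp (Finset.mem_range.mp hj)
    rw [mul_assoc, coeff_C_mul, show 2 * n = (n + j) + (n - j) by omega, coeff_X_pow_mul,
      coeff_exp_sub_one_pow_s5]
  rw [mul_sub, map_sub, hvanish, hxpow, sub_zero, hrhs] at hcoeff
  have hn : (n.factorial : ℚ) ≠ 0 := Nat.cast_ne_zero.mpr n.factorial_ne_zero
  have hB : (bernoulli n : ℚ) = (n.factorial : ℚ) *
      ∑ j ∈ Finset.range (n + 1), (-1) ^ j * ((n + 1).choose (j + 1) : ℚ) *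
        ((∑ k ∈ Finset.range (j + 1), (-1) ^ (j - k) * (j.choose k : ℚ) * (k : ℚ) ^ (n + j))
          / (n + j).factorial) := by
    rw [← hcoeff]
    field_simp
  rw [hB, Finset.mul_sum]
  refine Finset.sum_congr rfl fun j _ => ?_
  ring
end

section
/- For every nonnegative integer k and real numbers λ ≠ 0, α ≠ 0, and t such that λe^{αt} ≠ 1, the k-th derivative of f(t) = 1/(λe^{αt}-1) satisfies f^{(k)}(t) = (-1)^k α^k ∑_{m=1}^{k+1} (m-1)! S(k+1,m) (1/(λe^{αt}-1))^m, where S denotes Stirling numbers of the second kind. -/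
lemma stirling2_eq_zero : ∀ {n m : ℕ}, n < m → stirling2 n m = 0 := by
  intro n
  induction n with
  | zero => intro m h; cases m with | zero => omega | succ j => rfl
  | succ n ih =>
    intro m h
    cases m with
    | zero => omega
    | succ j => show (j+1) * stirling2 n (j+1) + stirling2 n j = 0
                rw [ih (by omega), ih (by omega)]; ring

lemma icc_to_range {M : Type*} [AddCommMonoid M] (f : ℕ → M) (n : ℕ) :
    ∑ m ∈ Finset.Icc 1 n, f m = ∑ i ∈ Finset.range n, f (i + 1) := by
  rw [← Finset.Ico_add_one_right_eq_Icc, Finset.sum_Ico_eq_sum_range]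
  simp [Nat.add_comm]

lemma stirling_sum_step (k : ℕ) (x : ℝ) :
    ∑ m ∈ Finset.Icc 1 (k+1), ((m-1).factorial : ℝ) * (stirling2 (k+1) m : ℝ) *
        ((m : ℝ) * (x^m + x^(m+1)))
    = ∑ m ∈ Finset.Icc 1 (k+2), ((m-1).factorial : ℝ) * (stirling2 (k+2) m : ℝ) * x^m := by
  rw [icc_to_range, icc_to_range]
  simp only [Nat.add_sub_cancel]
  have hrec : ∀ i, (stirling2 (k+2) (i+1) : ℝ)
      = (i+1) * stirling2 (k+1) (i+1) + stirling2 (k+1) i := by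
    intro i
    push_cast [show stirling2 (k+2) (i+1)
      = (i+1) * stirling2 (k+1) (i+1) + stirling2 (k+1) i from rfl]
    ring
  have hsplit : ∀ i ∈ Finset.range (k+2),
      (i.factorial : ℝ) * (stirling2 (k+2) (i+1) : ℝ) * x^(i+1)
      = (i.factorial : ℝ) * (i+1) * stirling2 (k+1) (i+1) * x^(i+1)
        + (i.factorial : ℝ) * stirling2 (k+1) i * x^(i+1) := by
    intro i _; rw [hrec]; ring
  rw [Finset.sum_congr rfl hsplit]
  rw [Finset.sum_add_distrib]
  rw [Finset.sum_range_succ (fun i => (i.factorial : ℝ) * (i+1) * stirling2 (k+1) (i+1) * x^(i+1))]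
  rw [stirling2_eq_zero (show k+1 < k+2 by omega)]
  rw [Finset.sum_range_succ' (fun i => (i.factorial : ℝ) * stirling2 (k+1) i * x^(i+1))]
  rw [show stirling2 (k+1) 0 = 0 from rfl]
  push_cast
  simp only [mul_zero, zero_mul, add_zero]
  rw [← Finset.sum_add_distrib]
  apply Finset.sum_congr rfl
  intro i _
  push_cast [Nat.factorial_succ]
  ring

lemma hasDerivAt_g (lam α s : ℝ) (hs : lam * Real.exp (α * s) ≠ 1) :
    HasDerivAt (fun u => 1 / (lam * Real.exp (α * u) - 1))
      (-α * (1 / (lam * Real.exp (α * s) - 1) + (1 / (lam * Real.exp (α * s) - 1))^2)) s := by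
  have hD : lam * Real.exp (α * s) - 1 ≠ 0 := sub_ne_zero.mpr hs
  have h1 : HasDerivAt (fun u : ℝ => α * u) α s := by
    simpa using (hasDerivAt_id s).const_mul α
  have h2 : HasDerivAt (fun u => lam * Real.exp (α * u) - 1)
      (lam * (Real.exp (α * s) * α)) s := ((h1.exp).const_mul lam).sub_const 1
  have h3 := h2.inv hD
  have h4 : HasDerivAt (fun u => 1 / (lam * Real.exp (α * u) - 1))
      (-(lam * (Real.exp (α * s) * α)) / (lam * Real.exp (α * s) - 1) ^ 2) s := by
    simp only [one_div]; exact h3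
  convert h4 using 1
  field_simp
  ring

lemma hasDerivAt_g_pow (lam α s : ℝ) (hs : lam * Real.exp (α * s) ≠ 1) (m : ℕ) (hm : 1 ≤ m) :
    HasDerivAt (fun u => (1 / (lam * Real.exp (α * u) - 1))^m)
      (-α * ((m : ℝ) * ((1 / (lam * Real.exp (α * s) - 1))^m
        + (1 / (lam * Real.exp (α * s) - 1))^(m+1)))) s := by
  obtain ⟨j, rfl⟩ : ∃ j, m = j + 1 := ⟨m - 1, by omega⟩
  have h := (hasDerivAt_g lam α s hs).fun_pow (j+1)
  refine h.congr_deriv ?_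
  push_cast [Nat.add_sub_cancel]
  ring

/-- For `λ ≠ 0`, `α ≠ 0` and `t` with `λ e^{αt} ≠ 1`, the `k`-th derivative of
`1/(λe^{αt}-1)` equals `(-1)^k α^k ∑_{m=1}^{k+1} (m-1)! S(k+1,m) (1/(λe^{αt}-1))^m`. -/
theorem iteratedDeriv_one_div_lambda_exp_sub_one
    (k : ℕ) (lam α t : ℝ) (hlam : lam ≠ 0) (hα : α ≠ 0)
    (ht : lam * Real.exp (α * t) ≠ 1) :
    iteratedDeriv k (fun s => 1 / (lam * Real.exp (α * s) - 1)) t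
      = (-1) ^ k * α ^ k * ∑ m ∈ Finset.Icc 1 (k + 1),
          ((m - 1).factorial : ℝ) * (stirling2 (k + 1) m : ℝ) *
            (1 / (lam * Real.exp (α * t) - 1)) ^ m := by
  induction k generalizing t with
  | zero =>
    simp [iteratedDeriv_zero, Finset.Icc_self, show stirling2 1 1 = 1 from rfl]
  | succ k ih =>
    rw [iteratedDeriv_succ]
    have hopen : IsOpen {s : ℝ | lam * Real.exp (α * s) ≠ 1} := by
      have : Continuous fun s : ℝ => lam * Real.exp (α * s) := by fun_prop
      exact isOpen_compl_singleton.preimage this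
    have hEv : (iteratedDeriv k (fun s => 1 / (lam * Real.exp (α * s) - 1)))
        =ᶠ[nhds t] (fun s => (-1) ^ k * α ^ k * ∑ m ∈ Finset.Icc 1 (k + 1),
          ((m - 1).factorial : ℝ) * (stirling2 (k + 1) m : ℝ) *
            (1 / (lam * Real.exp (α * s) - 1)) ^ m) := by
      filter_upwards [hopen.mem_nhds ht] with s hs
      exact ih s hs
    rw [hEv.deriv_eq]
    have hsum : HasDerivAt (fun s => ∑ m ∈ Finset.Icc 1 (k + 1),
        ((m - 1).factorial : ℝ) * (stirling2 (k + 1) m : ℝ) *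
          (1 / (lam * Real.exp (α * s) - 1)) ^ m)
        (∑ m ∈ Finset.Icc 1 (k + 1),
          ((m - 1).factorial : ℝ) * (stirling2 (k + 1) m : ℝ) *
          (-α * ((m : ℝ) * ((1 / (lam * Real.exp (α * t) - 1))^m
            + (1 / (lam * Real.exp (α * t) - 1))^(m+1))))) t := by
      apply HasDerivAt.fun_sum
      intro m hm
      exact (hasDerivAt_g_pow lam α t ht m (Finset.mem_Icc.mp hm).1).const_mul _
    have hfull := hsum.const_mul ((-1 : ℝ) ^ k * α ^ k)
    rw [hfull.deriv]
    have hkey := stirling_sum_step k (1 / (lam * Real.exp (α * t) - 1))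
    have hpull : ∑ m ∈ Finset.Icc 1 (k + 1),
        ((m - 1).factorial : ℝ) * (stirling2 (k + 1) m : ℝ) *
          (-α * ((m : ℝ) * ((1 / (lam * Real.exp (α * t) - 1))^m
            + (1 / (lam * Real.exp (α * t) - 1))^(m+1))))
        = -α * ∑ m ∈ Finset.Icc 1 (k + 1),
          ((m - 1).factorial : ℝ) * (stirling2 (k + 1) m : ℝ) *
            ((m : ℝ) * ((1 / (lam * Real.exp (α * t) - 1))^m
              + (1 / (lam * Real.exp (α * t) - 1))^(m+1))) := by
      rw [Finset.mul_sum]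
      exact Finset.sum_congr rfl fun m _ => by ring
    rw [hpull, hkey]
    ring
end
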